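/- For all real numbers pA0, pA1, a01, b01, p00, p01, p10, p11: if the 5×5 real symmetric matrix T whose upper-triangular entries (rows and columns indexed 1–5) are row 1: (1, pA0, pA1, 0, 0); row 2 (from the diagonal): (pA0, a01, p00, p01); row 3: (pA1, p10, p11); row 4: (0, b01); row 5: (0), is positive semidefinite, then −pA0 + p00 + p01 + p10 − p11 ≤ 0. Moreover, there exist values of the parameters for which T is positive semidefinite and −pA0 + p00 + p01 + p10 − p11 = 0, so the maximum of this objective over positive semidefinite matrices of this form equals 0. -/

import Mathlib

noncomputable def T (pA0 pA1 a01 b01 p00 p01 p10 p11 : ℝ) :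
    Matrix (Fin 5) (Fin 5) ℝ :=
  !![1, pA0, pA1, 0, 0;
     pA0, pA0, a01, p00, p01;
     pA1, a01, pA1, p10, p11;
     0, p00, p10, 0, b01;
     0, p01, p11, b01, 0]

lemma lin_nonneg_slope_zero (a b : ℝ) (h : ∀ t : ℝ, 0 ≤ a + t * b) : b = 0 := by
  by_contra hb
  have h1 := h (-(a + 1) / b)
  rw [div_mul_cancel₀ _ hb] at h1
  linarith

theorem stmt12 :
    (∀ pA0 pA1 a01 b01 p00 p01 p10 p11 : ℝ,
        (T pA0 pA1 a01 b01 p00 p01 p10 p11).PosSemidef →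
          -pA0 + p00 + p01 + p10 - p11 ≤ 0) ∧
    (∃ pA0 pA1 a01 b01 p00 p01 p10 p11 : ℝ,
        (T pA0 pA1 a01 b01 p00 p01 p10 p11).PosSemidef ∧
          -pA0 + p00 + p01 + p10 - p11 = 0) := by
  constructor
  · intro pA0 pA1 a01 b01 p00 p01 p10 p11 hT
    obtain ⟨hH, hpos⟩ := hT
    have key : ∀ x : Fin 5 → ℝ,
        0 ≤ x 0 * (x 0 + pA0 * x 1 + pA1 * x 2)
          + x 1 * (pA0 * x 0 + pA0 * x 1 + a01 * x 2 + p00 * x 3 + p01 * x 4)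
          + x 2 * (pA1 * x 0 + a01 * x 1 + pA1 * x 2 + p10 * x 3 + p11 * x 4)
          + x 3 * (p00 * x 1 + p10 * x 2 + b01 * x 4)
          + x 4 * (p01 * x 1 + p11 * x 2 + b01 * x 3) := by
      intro x
      have h := Matrix.PosSemidef.dotProduct_mulVec_nonneg ⟨hH, hpos⟩ x
      simp [T, Matrix.mulVec, dotProduct, Fin.sum_univ_five,
        Matrix.vecHead, Matrix.vecTail] at h
      nlinarith [h]
    have hp002 : (2:ℝ) * p00 = 0 := by
      apply lin_nonneg_slope_zero pA0
      intro t
      have h := key ![0, 1, 0, t, 0]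
      simp at h
      nlinarith [h]
    have hp00 : p00 = 0 := by linarith
    have hp012 : (2:ℝ) * p01 = 0 := by
      apply lin_nonneg_slope_zero pA0
      intro t
      have h := key ![0, 1, 0, 0, t]
      simp at h
      nlinarith [h]
    have hp01 : p01 = 0 := by linarith
    have hp102 : (2:ℝ) * p10 = 0 := by
      apply lin_nonneg_slope_zero pA1
      intro t
      have h := key ![0, 0, 1, t, 0]
      simp at h
      nlinarith [h]
    have hp10 : p10 = 0 := by linarith
    have hp112 : (2:ℝ) * p11 = 0 := by
      apply lin_nonneg_slope_zero pA1
      intro t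
      have h := key ![0, 0, 1, 0, t]
      simp at h
      nlinarith [h]
    have hp11 : p11 = 0 := by linarith
    have hA : 0 ≤ pA0 := by
      have h := key ![0, 1, 0, 0, 0]
      simp at h
      linarith
    linarith
  · refine ⟨0, 0, 0, 0, 0, 0, 0, 0, ?_, by ring⟩
    have : T 0 0 0 0 0 0 0 0 = Matrix.diagonal ![1, 0, 0, 0, 0] := by
      ext i j
      fin_cases i <;> fin_cases j <;>
        simp [T, Matrix.diagonal, Matrix.vecHead, Matrix.vecTail]
    rw [this]
    apply Matrix.PosSemidef.diagonal
    intro i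
    fin_cases i <;> norm_num
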